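/- Let f be a continuously differentiable probability density on [0,1] and τ : [0,1] → ℝ continuously differentiable. Let Δ = ∫₀¹ τ(p) p f(p) dp and E_k = Δ / (∫₀¹ f(p)(1−(1−p)^k) dp) for k ≥ 1 (assuming the denominator is positive, e.g. ∫₀¹ f(p)(1−(1−p)^k)dp ∈ (0,1]). Then there exists a constant M such that for all sufficiently large k, |E_k − Δ − Δ·f(0)/k| ≤ M/k². -/

import Mathlib

lemma aux_int_pow (k : ℕ) : ∫ p in (0:ℝ)..1, (1 - p) ^ k = 1 / (k + 1) := by
  have h := intervalIntegral.integral_comp_sub_left (a := (0:ℝ)) (b := 1)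
    (fun x : ℝ => x ^ k) 1
  simp only [sub_zero, sub_self] at h
  rw [show (fun p : ℝ => (1 - p) ^ k) = fun p : ℝ => (fun x : ℝ => x ^ k) (1 - p) from rfl] at *
  rw [h, integral_pow]
  norm_num

lemma aux_int_p_pow (k : ℕ) :
    ∫ p in (0:ℝ)..1, p * (1 - p) ^ k = 1 / ((k + 1) * (k + 2)) := by
  have h := intervalIntegral.integral_comp_sub_left (a := (0:ℝ)) (b := 1)
    (fun x : ℝ => (1 - x) * x ^ k) 1
  simp only [sub_zero, sub_self] at h
  have h2 : ∀ p : ℝ, p * (1 - p) ^ k = (fun x : ℝ => (1 - x) * x ^ k) (1 - p) := by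
    intro p; simp [sub_sub_cancel]
  calc ∫ p in (0:ℝ)..1, p * (1 - p) ^ k
      = ∫ p in (0:ℝ)..1, (fun x : ℝ => (1 - x) * x ^ k) (1 - p) := by
        exact intervalIntegral.integral_congr fun p _ => h2 p
    _ = ∫ x in (0:ℝ)..1, (1 - x) * x ^ k := h
    _ = ∫ x in (0:ℝ)..1, (x ^ k - x ^ (k + 1)) := by
        apply intervalIntegral.integral_congr; intro x _; ring
    _ = (∫ x in (0:ℝ)..1, x ^ k) - ∫ x in (0:ℝ)..1, x ^ (k + 1) := by
        apply intervalIntegral.integral_sub <;>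
          exact (continuous_pow _).intervalIntegrable 0 1
    _ = 1 / ((k + 1) * (k + 2)) := by
        rw [integral_pow, integral_pow]
        have h1 : (k : ℝ) + 1 ≠ 0 := by positivity
        have h2 : (k : ℝ) + 2 ≠ 0 := by positivity
        push_cast
        field_simp
        ring_nf

/-- Proposition 1: under Model 1 the heavy-user bias of the difference-in-means estimator
equals `Δ f(0) / k + O(k⁻²)`. -/
theorem heavy_user_bias_first_order
    (f f' τ τ' : ℝ → ℝ)
    (hf_deriv : ∀ p ∈ Set.Icc (0:ℝ) 1, HasDerivWithinAt f (f' p) (Set.Icc (0:ℝ) 1) p)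
    (hf'_cont : ContinuousOn f' (Set.Icc (0:ℝ) 1))
    (hτ_deriv : ∀ p ∈ Set.Icc (0:ℝ) 1, HasDerivWithinAt τ (τ' p) (Set.Icc (0:ℝ) 1) p)
    (hτ'_cont : ContinuousOn τ' (Set.Icc (0:ℝ) 1))
    (hf_nonneg : ∀ p ∈ Set.Icc (0:ℝ) 1, 0 ≤ f p)
    (hf_density : ∫ p in (0:ℝ)..1, f p = 1)
    (hden : ∀ k : ℕ, 1 ≤ k →
      (∫ p in (0:ℝ)..1, f p * (1 - (1 - p) ^ k)) ∈ Set.Ioc (0:ℝ) 1) :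
    ∃ M : ℝ, ∃ K : ℕ, ∀ k : ℕ, K ≤ k →
      |(∫ p in (0:ℝ)..1, τ p * p * f p) / (∫ p in (0:ℝ)..1, f p * (1 - (1 - p) ^ k))
          - (∫ p in (0:ℝ)..1, τ p * p * f p)
          - (∫ p in (0:ℝ)..1, τ p * p * f p) * f 0 / k|
        ≤ M / (k : ℝ) ^ 2 := by
  have hf_cont : ContinuousOn f (Set.Icc 0 1) := fun p hp => (hf_deriv p hp).continuousWithinAt
  obtain ⟨B0, hB0⟩ := isCompact_Icc.exists_bound_of_continuousOn hf_cont
  obtain ⟨L0, hL0⟩ := isCompact_Icc.exists_bound_of_continuousOn hf'_cont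
  set B := max B0 0 with hBdef
  set L := max L0 0 with hLdef
  have hB : ∀ p ∈ Set.Icc (0:ℝ) 1, |f p| ≤ B := fun p hp => (hB0 p hp).trans (le_max_left _ _)
  have hBnn : (0:ℝ) ≤ B := le_max_right _ _
  have hLb : ∀ p ∈ Set.Icc (0:ℝ) 1, ‖f' p‖ ≤ L := fun p hp => (hL0 p hp).trans (le_max_left _ _)
  have hLnn : (0:ℝ) ≤ L := le_max_right _ _
  have h0mem : (0:ℝ) ∈ Set.Icc (0:ℝ) 1 := ⟨le_refl _, zero_le_one⟩
  have h0B : |f 0| ≤ B := hB 0 h0mem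
  -- Lipschitz bound near 0
  have hlip : ∀ p ∈ Set.Icc (0:ℝ) 1, |f p - f 0| ≤ L * p := by
    intro p hp
    have := Convex.norm_image_sub_le_of_norm_hasDerivWithin_le hf_deriv hLb
      (convex_Icc 0 1) h0mem hp
    simpa [Real.norm_eq_abs, abs_of_nonneg hp.1] using this
  -- integrability facts
  have hpowc : ∀ k : ℕ, Continuous fun p : ℝ => (1 - p) ^ k := by
    intro k; exact (continuous_const.sub continuous_id).pow k
  have hint : ∀ k : ℕ, IntervalIntegrable (fun p => f p * (1 - p) ^ k)
      MeasureTheory.volume 0 1 := by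
    intro k
    apply ContinuousOn.intervalIntegrable
    rw [Set.uIcc_of_le zero_le_one]
    exact hf_cont.mul (hpowc k).continuousOn
  have hintf : IntervalIntegrable f MeasureTheory.volume 0 1 := by
    apply ContinuousOn.intervalIntegrable
    rw [Set.uIcc_of_le zero_le_one]
    exact hf_cont
  set I : ℕ → ℝ := fun k => ∫ p in (0:ℝ)..1, f p * (1 - p) ^ k with hIdef
  -- |I k| ≤ B / (k+1)
  have hIabs : ∀ k : ℕ, |I k| ≤ B / ((k:ℝ) + 1) := by
    intro k
    have h1 : ‖I k‖ ≤ ∫ p in (0:ℝ)..1, ‖f p * (1 - p) ^ k‖ :=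
      intervalIntegral.norm_integral_le_integral_norm zero_le_one
    have h2 : (∫ p in (0:ℝ)..1, ‖f p * (1 - p) ^ k‖)
        ≤ ∫ p in (0:ℝ)..1, B * (1 - p) ^ k := by
      apply intervalIntegral.integral_mono_on zero_le_one (hint k).norm
        (((continuous_const.mul (hpowc k))).intervalIntegrable 0 1)
      intro p hp
      have hpow : (0:ℝ) ≤ (1 - p) ^ k := pow_nonneg (by linarith [hp.2]) k
      rw [Real.norm_eq_abs, abs_mul, abs_of_nonneg hpow]
      exact mul_le_mul_of_nonneg_right (hB p hp) hpow
    have h3 : (∫ p in (0:ℝ)..1, B * (1 - p) ^ k) = B / ((k:ℝ) + 1) := by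
      rw [intervalIntegral.integral_const_mul, aux_int_pow]
      ring
    calc |I k| = ‖I k‖ := (Real.norm_eq_abs _).symm
      _ ≤ _ := h1
      _ ≤ _ := h2
      _ = _ := h3
  -- |I k - f 0 / (k+1)| ≤ L / ((k+1)(k+2))
  have hIdiff : ∀ k : ℕ, |I k - f 0 / ((k:ℝ) + 1)|
      ≤ L / (((k:ℝ) + 1) * ((k:ℝ) + 2)) := by
    intro k
    have heq : I k - f 0 / ((k:ℝ) + 1) = ∫ p in (0:ℝ)..1, (f p - f 0) * (1 - p) ^ k := by
      rw [show (fun p : ℝ => (f p - f 0) * (1 - p) ^ k)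
          = fun p : ℝ => f p * (1 - p) ^ k - f 0 * (1 - p) ^ k from funext fun p => by ring]
      rw [intervalIntegral.integral_sub (g := fun p => f 0 * (1 - p) ^ k) (hint k)
        ((continuous_const.mul (hpowc k)).intervalIntegrable 0 1),
        intervalIntegral.integral_const_mul, aux_int_pow]
      ring
    rw [heq]
    have hintd : IntervalIntegrable (fun p => (f p - f 0) * (1 - p) ^ k)
        MeasureTheory.volume 0 1 := by
      apply ContinuousOn.intervalIntegrable
      rw [Set.uIcc_of_le zero_le_one]
      exact (hf_cont.sub continuousOn_const).mul (hpowc k).continuousOn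
    have h1 : ‖∫ p in (0:ℝ)..1, (f p - f 0) * (1 - p) ^ k‖
        ≤ ∫ p in (0:ℝ)..1, ‖(f p - f 0) * (1 - p) ^ k‖ :=
      intervalIntegral.norm_integral_le_integral_norm zero_le_one
    have h2 : (∫ p in (0:ℝ)..1, ‖(f p - f 0) * (1 - p) ^ k‖)
        ≤ ∫ p in (0:ℝ)..1, L * (p * (1 - p) ^ k) := by
      apply intervalIntegral.integral_mono_on zero_le_one hintd.norm
      · exact (continuous_const.mul (continuous_id.mul (hpowc k))).intervalIntegrable 0 1
      intro p hp
      have hpow : (0:ℝ) ≤ (1 - p) ^ k := pow_nonneg (by linarith [hp.2]) k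
      rw [Real.norm_eq_abs, abs_mul, abs_of_nonneg hpow, ← mul_assoc]
      exact mul_le_mul_of_nonneg_right (hlip p hp) hpow
    have h3 : (∫ p in (0:ℝ)..1, L * (p * (1 - p) ^ k))
        = L / (((k:ℝ) + 1) * ((k:ℝ) + 2)) := by
      rw [intervalIntegral.integral_const_mul, aux_int_p_pow]
      ring
    calc |∫ p in (0:ℝ)..1, (f p - f 0) * (1 - p) ^ k|
        = ‖∫ p in (0:ℝ)..1, (f p - f 0) * (1 - p) ^ k‖ := (Real.norm_eq_abs _).symm
      _ ≤ _ := h1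
      _ ≤ _ := h2
      _ = _ := h3
  -- denominator identity
  have hD : ∀ k : ℕ, (∫ p in (0:ℝ)..1, f p * (1 - (1 - p) ^ k)) = 1 - I k := by
    intro k
    rw [show (fun p : ℝ => f p * (1 - (1 - p) ^ k))
        = fun p : ℝ => f p - f p * (1 - p) ^ k from funext fun p => by ring]
    rw [intervalIntegral.integral_sub hintf (hint k), hf_density]
  set Δ := ∫ p in (0:ℝ)..1, τ p * p * f p with hΔdef
  refine ⟨|Δ| * (L + B + 2 * B ^ 2), ⌈2 * B⌉₊ + 1, ?_⟩
  intro k hk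
  have hk1 : 1 ≤ k := le_trans (Nat.le_add_left 1 _) hk
  have hkR : (1:ℝ) ≤ (k:ℝ) := by exact_mod_cast hk1
  have hkpos : (0:ℝ) < (k:ℝ) := by linarith
  have h2B : 2 * B ≤ (k:ℝ) := by
    have h1 : (2:ℝ) * B ≤ (⌈2 * B⌉₊ : ℝ) := Nat.le_ceil _
    have h2 : ((⌈2 * B⌉₊ : ℕ) : ℝ) ≤ (k:ℝ) := by
      exact_mod_cast le_trans (Nat.le_succ _) hk
    linarith
  have hIk_half : |I k| ≤ 1 / 2 := by
    have := hIabs k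
    have h1 : B / ((k:ℝ) + 1) ≤ 1 / 2 := by
      rw [div_le_div_iff₀ (by linarith) (by norm_num)]
      linarith
    linarith
  have hden' := hden k hk1
  rw [hD k] at hden' ⊢
  have hDpos : (0:ℝ) < 1 - I k := hden'.1
  have hDhalf : (1:ℝ) / 2 ≤ 1 - I k := by
    have := abs_le.mp hIk_half
    linarith [this.2]
  -- key algebraic identity
  have key : Δ / (1 - I k) - Δ - Δ * f 0 / (k:ℝ)
      = Δ * ((I k - f 0 / (k:ℝ)) + (I k) ^ 2 / (1 - I k)) := by
    field_simp
    ring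
  rw [key, abs_mul]
  have hb1 : |I k - f 0 / (k:ℝ)| ≤ (L + B) / (k:ℝ) ^ 2 := by
    have e0 : I k - f 0 / (k:ℝ)
        = (I k - f 0 / ((k:ℝ) + 1)) + (f 0 / ((k:ℝ) + 1) - f 0 / (k:ℝ)) := by ring
    have e1 := hIdiff k
    have e2 : |f 0 / ((k:ℝ) + 1) - f 0 / (k:ℝ)| = |f 0| / ((k:ℝ) * ((k:ℝ) + 1)) := by
      rw [show f 0 / ((k:ℝ) + 1) - f 0 / (k:ℝ) = -(f 0 / ((k:ℝ) * ((k:ℝ) + 1))) by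
        field_simp; ring]
      rw [abs_neg, abs_div, abs_of_pos (by nlinarith : (0:ℝ) < (k:ℝ) * ((k:ℝ) + 1))]
    have e3 : L / (((k:ℝ) + 1) * ((k:ℝ) + 2)) ≤ L / (k:ℝ) ^ 2 := by
      apply div_le_div_of_nonneg_left hLnn (by positivity)
      nlinarith
    have e4 : |f 0| / ((k:ℝ) * ((k:ℝ) + 1)) ≤ B / (k:ℝ) ^ 2 := by
      apply div_le_div₀ hBnn h0B (by positivity)
      nlinarith
    calc |I k - f 0 / (k:ℝ)| ≤ |I k - f 0 / ((k:ℝ) + 1)| + |f 0 / ((k:ℝ) + 1) - f 0 / (k:ℝ)| := by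
          rw [e0]; exact abs_add_le _ _
      _ ≤ L / (k:ℝ) ^ 2 + B / (k:ℝ) ^ 2 := by
          rw [e2] at *
          exact add_le_add (e1.trans e3) e4
      _ = (L + B) / (k:ℝ) ^ 2 := by ring
  have hb2 : (I k) ^ 2 / (1 - I k) ≤ 2 * B ^ 2 / (k:ℝ) ^ 2 := by
    have hI2 : (I k) ^ 2 ≤ B ^ 2 / (k:ℝ) ^ 2 := by
      have h1 : |I k| ≤ B / (k:ℝ) := by
        have := hIabs k
        have : B / ((k:ℝ) + 1) ≤ B / (k:ℝ) :=
          div_le_div_of_nonneg_left hBnn hkpos (by linarith)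
        linarith [hIabs k]
      calc (I k) ^ 2 = |I k| ^ 2 := (sq_abs _).symm
        _ ≤ (B / (k:ℝ)) ^ 2 := pow_le_pow_left₀ (abs_nonneg _) h1 2
        _ = B ^ 2 / (k:ℝ) ^ 2 := div_pow B _ 2
    have h3 : (I k) ^ 2 / (1 - I k) ≤ (I k) ^ 2 / (1 / 2) :=
      div_le_div_of_nonneg_left (sq_nonneg _) (by norm_num) hDhalf
    have h4 : (I k) ^ 2 / (1 / 2) = 2 * (I k) ^ 2 := by ring
    calc (I k) ^ 2 / (1 - I k) ≤ 2 * (I k) ^ 2 := by rw [← h4]; exact h3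
      _ ≤ 2 * (B ^ 2 / (k:ℝ) ^ 2) := by linarith
      _ = 2 * B ^ 2 / (k:ℝ) ^ 2 := by ring
  have habs2 : |(I k - f 0 / (k:ℝ)) + (I k) ^ 2 / (1 - I k)|
      ≤ (L + B) / (k:ℝ) ^ 2 + 2 * B ^ 2 / (k:ℝ) ^ 2 := by
    calc |(I k - f 0 / (k:ℝ)) + (I k) ^ 2 / (1 - I k)|
        ≤ |I k - f 0 / (k:ℝ)| + |(I k) ^ 2 / (1 - I k)| := abs_add_le _ _
      _ ≤ (L + B) / (k:ℝ) ^ 2 + 2 * B ^ 2 / (k:ℝ) ^ 2 := by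
          apply add_le_add hb1
          rw [abs_of_nonneg (div_nonneg (sq_nonneg _) (le_of_lt hDpos))]
          exact hb2
  calc |Δ| * |(I k - f 0 / (k:ℝ)) + (I k) ^ 2 / (1 - I k)|
      ≤ |Δ| * ((L + B) / (k:ℝ) ^ 2 + 2 * B ^ 2 / (k:ℝ) ^ 2) :=
        mul_le_mul_of_nonneg_left habs2 (abs_nonneg _)
    _ = |Δ| * (L + B + 2 * B ^ 2) / (k:ℝ) ^ 2 := by ring
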